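/- arXiv:1502.02856 — 2 statements merged into one kernel-verified Lean document; each statement's English description precedes it below -/
import Mathlib

section
/- Assume μ_H > μ_L and λ < s μ_L, and for each j ∈ {0,…,s} let x_j denote the smallest nonnegative real root of q_j (for j = s the polynomial q_s is affine and x_s = λ/(λ + s μ_H)). Then the sequence (x_j) is strictly decreasing in j: x_{j+1} < x_j for all 0 ≤ j ≤ s−1. In particular every x_j with j ≥ 1 lies strictly below x_0 = λ/(s μ_L). -/
/-- The quadratic q_j(x) = λ − (λ + (s−j)μ_L + j μ_H) x + (s−j) μ_L x². -/
noncomputable def qpoly (s j : ℕ) (lam muH muL : ℝ) (x : ℝ) : ℝ :=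
  lam - (lam + ((s : ℝ) - (j : ℝ)) * muL + (j : ℝ) * muH) * x + ((s : ℝ) - (j : ℝ)) * muL * x ^ 2

/-- assume μ_H > μ_L and λ < sμ_L, and let x_j be the smallest nonnegative real
root of q_j for 0 ≤ j ≤ s (for j = s, q_s is affine with x_s = λ/(λ + sμ_H)).  Then
x_{j+1} < x_j for all 0 ≤ j ≤ s−1; in particular x_0 = λ/(sμ_L) and every x_j with j ≥ 1 lies
strictly below x_0. -/
theorem statement3 (s : ℕ) (hs : 1 ≤ s) (lam muH muL : ℝ)
    (hlam : 0 < lam) (hmuH : 0 < muH) (hmuL : 0 < muL)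
    (hHL : muL < muH) (hstab : lam < (s : ℝ) * muL)
    (x : ℕ → ℝ)
    (hx : ∀ j ≤ s, IsLeast {y : ℝ | 0 ≤ y ∧ qpoly s j lam muH muL y = 0} (x j)) :
    (∀ j, j + 1 ≤ s → x (j + 1) < x j) ∧
    x 0 = lam / ((s : ℝ) * muL) ∧
    x s = lam / (lam + (s : ℝ) * muH) ∧
    (∀ j, 1 ≤ j → j ≤ s → x j < lam / ((s : ℝ) * muL)) := by
  have hsmuL : (0:ℝ) < (s : ℝ) * muL := hlam.trans hstab
  -- positivity of the roots
  have hpos : ∀ j, j ≤ s → 0 < x j := by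
    intro j hj
    obtain ⟨⟨hx0, hroot⟩, -⟩ := hx j hj
    rcases hx0.lt_or_eq with h | h
    · exact h
    · exfalso
      rw [← h] at hroot
      simp [qpoly] at hroot
      linarith
  -- strict decrease
  have hdec : ∀ j, j + 1 ≤ s → x (j + 1) < x j := by
    intro j hj
    have hj' : j ≤ s := by omega
    obtain ⟨⟨hx0, hroot⟩, hlb⟩ := hx j hj'
    obtain ⟨⟨hx0', hroot'⟩, hlb'⟩ := hx (j + 1) hj
    have hxjpos := hpos j hj'
    have hneg : qpoly s (j + 1) lam muH muL (x j) < 0 := by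
      have hcast : ((j + 1 : ℕ) : ℝ) = (j : ℝ) + 1 := by push_cast; ring
      have key : qpoly s (j + 1) lam muH muL (x j)
          = qpoly s j lam muH muL (x j) - (muH - muL) * x j - muL * (x j) ^ 2 := by
        simp only [qpoly, hcast]; ring
      rw [key, hroot]
      nlinarith
    have hcont : ContinuousOn (fun y => qpoly s (j + 1) lam muH muL y)
        (Set.Icc 0 (x j)) := by
      apply Continuous.continuousOn
      unfold qpoly
      continuity
    have hivt := intermediate_value_Ioo' (le_of_lt hxjpos) hcont
    have h0mem : (0:ℝ) ∈ Set.Ioo (qpoly s (j + 1) lam muH muL (x j))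
        (qpoly s (j + 1) lam muH muL 0) := by
      constructor
      · exact hneg
      · simp [qpoly]; linarith
    obtain ⟨y, hy, hyeq⟩ := hivt h0mem
    have hle : x (j + 1) ≤ y := hlb' ⟨le_of_lt hy.1, hyeq⟩
    exact lt_of_le_of_lt hle hy.2
  -- x 0
  have hx0eq : x 0 = lam / ((s : ℝ) * muL) := by
    obtain ⟨⟨hx0, hroot⟩, hlb⟩ := hx 0 (Nat.zero_le s)
    have hrroot : qpoly s 0 lam muH muL (lam / ((s : ℝ) * muL)) = 0 := by
      simp only [qpoly]
      field_simp
      ring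
    have hrnn : (0:ℝ) ≤ lam / ((s : ℝ) * muL) := le_of_lt (div_pos hlam hsmuL)
    have hle : x 0 ≤ lam / ((s : ℝ) * muL) := hlb ⟨hrnn, hrroot⟩
    have hfac : (1 - x 0) * (lam - (s : ℝ) * muL * x 0) = 0 := by
      simp only [qpoly, Nat.cast_zero] at hroot
      linear_combination hroot
    rcases mul_eq_zero.mp hfac with h | h
    · exfalso
      have : x 0 = 1 := by linarith
      have hr1 : lam / ((s : ℝ) * muL) < 1 := (div_lt_one hsmuL).mpr hstab
      linarith
    · have : lam = (s : ℝ) * muL * x 0 := by linarith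
      field_simp [this]
      linarith
  -- x s
  have hxseq : x s = lam / (lam + (s : ℝ) * muH) := by
    obtain ⟨⟨hx0, hroot⟩, -⟩ := hx s le_rfl
    simp only [qpoly, sub_self, zero_mul, mul_zero, add_zero] at hroot
    have hd : (0:ℝ) < lam + (s : ℝ) * muH := by positivity
    field_simp
    nlinarith [hroot]
  refine ⟨hdec, hx0eq, hxseq, ?_⟩
  have key : ∀ j, 1 ≤ j → j ≤ s → x j < x 0 := by
    intro j
    induction j with
    | zero => omega
    | succ n ih =>
      intro _ hns
      rcases Nat.eq_zero_or_pos n with h | h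
      · subst h; exact hdec 0 hns
      · exact lt_trans (hdec n hns) (ih h (by omega))
  intro j h1 h2
  rw [← hx0eq]
  exact key j h1 h2
end

section
/- Let R be an n×n real lower triangular matrix all of whose diagonal entries have absolute value strictly less than 1. Then I − R is invertible, the series ∑_{k=0}^∞ R^k converges (entrywise), and ∑_{k=0}^∞ R^k = (I − R)^{-1}. -/
open scoped NNReal

section Aux

attribute [local instance] Matrix.linftyOpNormedRing Matrix.linftyOpNormedAlgebra
  Matrix.linftyOpNormedSpace Matrix.linftyOpIsBoundedSMul

lemma aux_geom (n : ℕ) (S : Matrix (Fin n) (Fin n) ℝ) (hS : ‖S‖ < 1) :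
    IsUnit (1 - S) ∧ ∀ i j, HasSum (fun k : ℕ => (S ^ k) i j) ((1 - S)⁻¹ i j) := by
  haveI : CompleteSpace (Matrix (Fin n) (Fin n) ℝ) :=
    (inferInstance : CompleteSpace (Fin n → Fin n → ℝ))
  have hu : IsUnit (1 - S) := isUnit_one_sub_of_norm_lt_one hS
  refine ⟨hu, fun i j => ?_⟩
  have h1 : HasSum (fun k : ℕ => S ^ k) (Ring.inverse (1 - S)) :=
    hasSum_geom_series_inverse S hS
  rw [Matrix.nonsing_inv_eq_ringInverse]
  have hb : ∀ A : Matrix (Fin n) (Fin n) ℝ, ‖A i j‖ ≤ ‖A‖ := by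
    intro A
    have h2 : ‖A i j‖₊ ≤ ‖A‖₊ := by
      rw [Matrix.linfty_opNNNorm_def]
      exact le_trans
        (Finset.single_le_sum (f := fun j' => ‖A i j'‖₊) (fun _ _ => zero_le)
          (Finset.mem_univ j))
        (Finset.le_sup (f := fun i' => ∑ j' : Fin n, ‖A i' j'‖₊) (Finset.mem_univ i))
    exact h2
  let f : Matrix (Fin n) (Fin n) ℝ →ₗ[ℝ] ℝ :=
    { toFun := fun A => A i j
      map_add' := fun _ _ => rfl
      map_smul' := fun _ _ => rfl }
  have hc : Continuous f := (f.mkContinuous 1 (fun A => by rw [one_mul]; exact hb A)).cont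
  exact h1.map f.toAddMonoidHom hc

end Aux

/-- if R is an n×n real lower triangular matrix with all diagonal entries of
absolute value < 1, then I − R is invertible, the series ∑ R^k converges, and its sum is
(I − R)⁻¹. -/
theorem statement6 (n : ℕ) (R : Matrix (Fin n) (Fin n) ℝ)
    (hlow : ∀ i j : Fin n, i < j → R i j = 0)
    (hdiag : ∀ i : Fin n, |R i i| < 1) :
    IsUnit (1 - R) ∧ HasSum (fun k : ℕ => R ^ k) (1 - R)⁻¹ := by
  rcases Nat.eq_zero_or_pos n with hn | hn
  · subst hn
    haveI : Subsingleton (Matrix (Fin 0) (Fin 0) ℝ) :=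
      ⟨fun A B => by ext i j; exact i.elim0⟩
    refine ⟨⟨⟨1 - R, 1, Subsingleton.elim _ _, Subsingleton.elim _ _⟩, rfl⟩, ?_⟩
    convert (hasSum_zero : HasSum (fun _ : ℕ => (0 : Matrix (Fin 0) (Fin 0) ℝ)) 0) using 1
  · haveI : Nonempty (Fin n) := Fin.pos_iff_nonempty.mp hn
    set C : ℝ := ∑ i, ∑ j, |R i j| with hC
    have hC0 : 0 ≤ C := Finset.sum_nonneg fun _ _ => Finset.sum_nonneg fun _ _ => abs_nonneg _
    set δ : ℝ := Finset.univ.inf' Finset.univ_nonempty (fun i => 1 - |R i i|) with hδ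
    have hδ0 : 0 < δ := by
      rw [hδ, Finset.lt_inf'_iff]
      intro i _
      linarith [hdiag i]
    have hδle : ∀ i : Fin n, δ ≤ 1 - |R i i| := fun i =>
      Finset.inf'_le _ (Finset.mem_univ i)
    set ε : ℝ := min 1 (δ / (2 * (C + 1))) with hε
    have hε0 : 0 < ε := lt_min one_pos (div_pos hδ0 (by positivity))
    have hε1 : ε ≤ 1 := min_le_left _ _
    have hεδ : ε * C < δ := by
      have h1 : ε ≤ δ / (2 * (C + 1)) := min_le_right _ _
      have h2 : ε * (2 * (C + 1)) ≤ δ := by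
        rw [← le_div_iff₀ (by positivity)]; exact h1
      nlinarith [mul_pos hε0 (show (0:ℝ) < C + 2 by linarith)]
    set d : Fin n → ℝ := fun i => ε ^ (i : ℕ) with hd
    set e : Fin n → ℝ := fun i => (ε ^ (i : ℕ))⁻¹ with he
    have hdne : ∀ i, d i ≠ 0 := fun i => pow_ne_zero _ (ne_of_gt hε0)
    set D : Matrix (Fin n) (Fin n) ℝ := Matrix.diagonal d with hD
    set E : Matrix (Fin n) (Fin n) ℝ := Matrix.diagonal e with hE
    have hED : E * D = 1 := by
      ext i j
      rcases eq_or_ne i j with rfl | hij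
      · simp [hE, hD, Matrix.diagonal_mul, inv_mul_cancel₀ (hdne i)]; exact inv_mul_cancel₀ (hdne i)
      · simp [hE, hD, Matrix.diagonal_mul, Matrix.diagonal_apply_ne _ hij,
          Matrix.one_apply_ne hij]
    have hDE : D * E = 1 := by
      ext i j
      rcases eq_or_ne i j with rfl | hij
      · simp [hE, hD, Matrix.diagonal_mul, mul_inv_cancel₀ (hdne i)]; exact mul_inv_cancel₀ (hdne i)
      · simp [hE, hD, Matrix.diagonal_mul, Matrix.diagonal_apply_ne _ hij,
          Matrix.one_apply_ne hij]
    set S : Matrix (Fin n) (Fin n) ℝ := D * R * E with hSdef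
    have hSentry : ∀ i j, S i j = d i * R i j * e j := by
      intro i j
      rw [hSdef, hD, hE]
      simp [Matrix.diagonal_mul, Matrix.mul_diagonal]
    -- key norm bound
    have hrow : ∀ i : Fin n, ∑ j, |S i j| < 1 := by
      intro i
      have hsplit : ∑ j, |S i j| = |S i i| + ∑ j ∈ Finset.univ.erase i, |S i j| :=
        (Finset.add_sum_erase _ _ (Finset.mem_univ i)).symm
      have hdiagS : |S i i| = |R i i| := by
        rw [hSentry i i]
        have : d i * R i i * e i = R i i := by
          rw [hd, he]
          field_simp
        rw [this]
      have hoff : ∀ j ∈ Finset.univ.erase i, |S i j| ≤ ε * |R i j| := by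
        intro j hj
        have hji : j ≠ i := Finset.ne_of_mem_erase hj
        rcases lt_or_gt_of_ne hji with hlt | hgt
        · -- j < i : below diagonal
          rw [hSentry i j, hd, he]
          have hle : (j : ℕ) ≤ (i : ℕ) := le_of_lt hlt
          have : ε ^ (i : ℕ) * R i j * (ε ^ (j : ℕ))⁻¹ =
              ε ^ ((i : ℕ) - (j : ℕ)) * R i j := by
            rw [pow_sub₀ ε (ne_of_gt hε0) hle]; ring
          rw [this, abs_mul, abs_of_nonneg (pow_nonneg hε0.le _)]
          have hp : ε ^ ((i : ℕ) - (j : ℕ)) ≤ ε ^ 1 :=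
            pow_le_pow_of_le_one hε0.le hε1 (by omega)
          rw [pow_one] at hp
          exact mul_le_mul_of_nonneg_right hp (abs_nonneg _)
        · -- i < j : zero entry
          rw [hSentry i j, hlow i j hgt]
          simp [mul_nonneg hε0.le (abs_nonneg _)]
      have hsum_off : ∑ j ∈ Finset.univ.erase i, |S i j| ≤ ε * C := by
        calc ∑ j ∈ Finset.univ.erase i, |S i j|
            ≤ ∑ j ∈ Finset.univ.erase i, ε * |R i j| := Finset.sum_le_sum hoff
          _ = ε * ∑ j ∈ Finset.univ.erase i, |R i j| := by rw [Finset.mul_sum]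
          _ ≤ ε * ∑ j, |R i j| := by
              apply mul_le_mul_of_nonneg_left _ hε0.le
              exact Finset.sum_le_sum_of_subset_of_nonneg (Finset.erase_subset _ _)
                (fun _ _ _ => abs_nonneg _)
          _ ≤ ε * C := by
              apply mul_le_mul_of_nonneg_left _ hε0.le
              exact Finset.single_le_sum (f := fun i' => ∑ j, |R i' j|)
                (fun _ _ => Finset.sum_nonneg fun _ _ => abs_nonneg _) (Finset.mem_univ i)
      have := hδle i
      rw [hsplit, hdiagS]
      linarith
    have hS : @norm _ (Matrix.linftyOpNormedAddCommGroup (α := ℝ)).toNorm S < 1 := by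
      rw [Matrix.linfty_opNorm_def]
      rw [show (1:ℝ) = ((1 : ℝ≥0) : ℝ) by norm_num, NNReal.coe_lt_coe]
      rw [Finset.sup_lt_iff (by norm_num : (⊥ : ℝ≥0) < 1)]
      intro i _
      have h := hrow i
      rw [show (1 : ℝ≥0) = ⟨1, zero_le_one⟩ by rfl]
      have h' : ((∑ j, ‖S i j‖₊ : ℝ≥0) : ℝ) < ((⟨1, zero_le_one⟩ : ℝ≥0) : ℝ) := by
        rw [NNReal.coe_sum]; simpa [Real.norm_eq_abs] using h
      exact NNReal.coe_lt_coe.mp h'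
    obtain ⟨hu, hsum⟩ := aux_geom n S hS
    have key : 1 - R = E * (1 - S) * D := by
      have h1 : (1 : Matrix (Fin n) (Fin n) ℝ) - S = D * (1 - R) * E := by
        rw [hSdef, mul_sub, sub_mul, mul_one, hDE, ← hSdef]
      rw [h1]
      have h2 : E * (D * (1 - R) * E) * D = (E * D) * (1 - R) * (E * D) := by
        noncomm_ring
      rw [h2, hED, one_mul, mul_one]
    have huR : IsUnit (1 - R) := by
      rw [key]
      have hE' : IsUnit E := ⟨⟨E, D, hED, hDE⟩, rfl⟩
      have hD' : IsUnit D := ⟨⟨D, E, hDE, hED⟩, rfl⟩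
      exact (hE'.mul hu).mul hD'
    have hDinv : D⁻¹ = E := Matrix.inv_eq_left_inv hED
    have hEinv : E⁻¹ = D := Matrix.inv_eq_left_inv hDE
    have hinv : (1 - R)⁻¹ = E * (1 - S)⁻¹ * D := by
      rw [key, Matrix.mul_inv_rev, Matrix.mul_inv_rev, hDinv, hEinv, ← mul_assoc]
    have hSk : ∀ k : ℕ, S ^ k = D * R ^ k * E := by
      intro k
      induction k with
      | zero => simp [hDE]
      | succ k ih =>
          rw [pow_succ, pow_succ, ih, hSdef]
          calc D * R ^ k * E * (D * R * E) = D * R ^ k * (E * D) * R * E := by noncomm_ring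
            _ = D * (R ^ k * R) * E := by rw [hED]; noncomm_ring
    refine ⟨huR, ?_⟩
    have hentry : ∀ i j, HasSum (fun k : ℕ => (R ^ k) i j) ((1 - R)⁻¹ i j) := by
      intro i j
      have h := ((hsum i j).mul_left (e i)).mul_right (d j)
      have hfun : ∀ k : ℕ, (R ^ k) i j = e i * (S ^ k) i j * d j := by
        intro k
        rw [hSk k, hD, hE]
        simp only [Matrix.diagonal_mul, Matrix.mul_diagonal]
        rw [hd, he]
        field_simp
      have hval : (1 - R)⁻¹ i j = e i * (1 - S)⁻¹ i j * d j := by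
        rw [hinv, hD, hE]
        simp [Matrix.diagonal_mul, Matrix.mul_diagonal]
      rw [hval]
      simpa [← hfun] using h
    exact Pi.hasSum.mpr fun i => Pi.hasSum.mpr fun j => hentry i j
end
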